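/- Let A be an integral m×n matrix and b ∈ ℝᵐ, and suppose the system Ax ≥ b is totally dual integral and P = {x : Ax ≥ b} is nonempty. Then the Chvátal closure of P equals {x : Ax ≥ ⌈b⌉}, where ⌈b⌉ is the componentwise ceiling of b. -/

import Mathlib

/-- The Chvátal closure of a set P ⊆ ℝⁿ: the intersection, over all inequalities
cᵀx ≥ d valid for P with c integral, of the halfspaces {x : cᵀx ≥ ⌈d⌉}. -/
def chvatalClosure {n : ℕ} (P : Set (Fin n → ℝ)) : Set (Fin n → ℝ) :=
  {x | ∀ (c : Fin n → ℤ) (d : ℝ), (∀ y ∈ P, d ≤ ∑ i, (c i : ℝ) * y i) →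
        (⌈d⌉ : ℝ) ≤ ∑ i, (c i : ℝ) * x i}

/-- The t-th iterated Chvátal closure. -/
def chvatalIter {n : ℕ} (t : ℕ) (P : Set (Fin n → ℝ)) : Set (Fin n → ℝ) :=
  chvatalClosure^[t] P

/-- Total dual integrality of an integral system Ax ≥ b (b possibly nonrational):
whenever the minimum of cᵀx over {x : Ax ≥ b} is attained (finite) for an integral c,
there is an integral dual-feasible y with yᵀA = c whose objective yᵀb equals the minimum. -/
def TDIInt {m n : ℕ} (A : Matrix (Fin m) (Fin n) ℤ) (b : Fin m → ℝ) : Prop :=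
  ∀ (c : Fin n → ℤ) (v : ℝ),
    IsLeast {w : ℝ | ∃ x : Fin n → ℝ,
        (∀ i, b i ≤ ∑ j, (A i j : ℝ) * x j) ∧ w = ∑ j, (c j : ℝ) * x j} v →
    ∃ y : Fin m → ℤ, (∀ i, 0 ≤ y i) ∧
      (∀ j, ∑ i, y i * A i j = c j) ∧ (∑ i, (y i : ℝ) * b i) = v


/-- Fourier–Motzkin elimination of the last variable. -/
lemma elimStep {n : ℕ} {ι : Type} [Fintype ι] (A : ι → Fin (n+1) → ℝ) (b : ι → ℝ) :
    ∃ (κ : Type) (_ : Fintype κ) (A' : κ → Fin n → ℝ) (b' : κ → ℝ),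
      ∀ y : Fin n → ℝ,
        (∀ k, b' k ≤ ∑ j, A' k j * y j) ↔
        ∃ s : ℝ, ∀ i, b i ≤ ∑ j, A i j * (Fin.snoc y s : Fin (n+1) → ℝ) j := by
  classical
  set a : ι → ℝ := fun i => A i (Fin.last n) with ha
  set A' : ι ⊕ ι × ι → Fin n → ℝ := Sum.elim
      (fun i => if a i = 0 then (fun l => A i (Fin.castSucc l)) else 0)
      (fun p => if 0 < a p.1 ∧ a p.2 < 0
        then (fun l => a p.1 * A p.2 (Fin.castSucc l) - a p.2 * A p.1 (Fin.castSucc l))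
        else 0) with hA'
  set b' : ι ⊕ ι × ι → ℝ := Sum.elim (fun i => if a i = 0 then b i else 0)
      (fun p => if 0 < a p.1 ∧ a p.2 < 0 then a p.1 * b p.2 - a p.2 * b p.1 else 0) with hb'
  refine ⟨ι ⊕ ι × ι, inferInstance, A', b', ?_⟩
  intro y
  have hsplit : ∀ (i : ι) (s : ℝ),
      ∑ j, A i j * (Fin.snoc y s : Fin (n+1) → ℝ) j
        = (∑ l : Fin n, A i (Fin.castSucc l) * y l) + a i * s := by
    intro i s
    rw [Fin.sum_univ_castSucc]
    simp [Fin.snoc_castSucc, Fin.snoc_last, ha]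
  set g : ι → ℝ := fun i => ∑ l : Fin n, A i (Fin.castSucc l) * y l with hg
  have hpair : ∀ i j : ι, 0 < a i → a j < 0 →
      (∀ k, b' k ≤ ∑ l, A' k l * y l) →
      a i * b j - a j * b i ≤ a i * g j - a j * g i := by
    intro i j hi hj hy
    have hk := hy (Sum.inr (i, j))
    simp only [hA', hb', Sum.elim_inr, if_pos (And.intro hi hj)] at hk
    have hsum : ∑ l, (a i * A j (Fin.castSucc l) - a j * A i (Fin.castSucc l)) * y l
        = a i * g j - a j * g i := by
      simp [hg, sub_mul, Finset.sum_sub_distrib, Finset.mul_sum, mul_assoc]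
    rwa [hsum] at hk
  have hzrow : ∀ i : ι, a i = 0 →
      (∀ k, b' k ≤ ∑ l, A' k l * y l) → b i ≤ g i := by
    intro i hzero hy
    have hk := hy (Sum.inl i)
    simp only [hA', hb', Sum.elim_inl, if_pos hzero] at hk
    simpa [hg] using hk
  constructor
  · intro hy
    by_cases hpos : ∃ i, 0 < a i
    · set L : Set ℝ := (fun i => (b i - g i) / a i) '' {i | 0 < a i} with hL
      have hLfin : L.Finite := (Set.toFinite _).image _
      have hLne : L.Nonempty := by
        obtain ⟨i, hi⟩ := hpos; exact ⟨_, ⟨i, hi, rfl⟩⟩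
      set s := sSup L with hs
      have hsmem : s ∈ L := hLne.csSup_mem hLfin
      refine ⟨s, fun i => ?_⟩
      rw [hsplit]
      rcases lt_trichotomy (a i) 0 with hneg | hzero | hposi
      · obtain ⟨i₀, hi₀, hs0⟩ := hsmem
        have hi₀' : (0:ℝ) < a i₀ := hi₀
        have hk := hpair i₀ i hi₀' hneg hy
        have h0 : a i₀ ≠ 0 := ne_of_gt hi₀'
        have hmul : a i₀ * (a i * s) = a i * b i₀ - a i * g i₀ := by
          rw [← hs0]; field_simp
        by_contra hcon
        push_neg at hcon
        have h2 := mul_lt_mul_of_pos_left hcon hi₀'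
        rw [mul_add, hmul] at h2
        linarith
      · rw [hzero]
        simpa using hzrow i hzero hy
      · have hle : (b i - g i) / a i ≤ s :=
          le_csSup hLfin.bddAbove ⟨i, hposi, rfl⟩
        have := mul_le_mul_of_nonneg_right hle (le_of_lt hposi)
        rw [div_mul_cancel₀ _ (ne_of_gt hposi)] at this
        linarith
    · by_cases hneg : ∃ i, a i < 0
      · set U : Set ℝ := (fun i => (b i - g i) / a i) '' {i | a i < 0} with hU
        have hUfin : U.Finite := (Set.toFinite _).image _
        have hUne : U.Nonempty := by
          obtain ⟨i, hi⟩ := hneg; exact ⟨_, ⟨i, hi, rfl⟩⟩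
        refine ⟨sInf U, fun i => ?_⟩
        rw [hsplit]
        rcases lt_trichotomy (a i) 0 with hni | hzero | hpi
        · have hle : sInf U ≤ (b i - g i) / a i :=
            csInf_le hUfin.bddBelow ⟨i, hni, rfl⟩
          have := mul_le_mul_of_nonpos_right hle (le_of_lt hni)
          rw [div_mul_cancel₀ _ (ne_of_lt hni)] at this
          linarith [this]
        · rw [hzero]
          simpa using hzrow i hzero hy
        · exact absurd ⟨i, hpi⟩ hpos
      · push_neg at hpos hneg
        refine ⟨0, fun i => ?_⟩
        have hzero : a i = 0 := le_antisymm (hpos i) (hneg i)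
        rw [hsplit, hzero]
        simpa using hzrow i hzero hy
  · rintro ⟨s, hs⟩ k
    rcases k with i | ⟨i, j⟩
    · by_cases h : a i = 0
      · have := hs i
        rw [hsplit, h] at this
        simp only [hA', hb', Sum.elim_inl, if_pos h]
        simpa [hg] using this
      · simp [hA', hb', h]
    · by_cases h : 0 < a i ∧ a j < 0
      · have h1 := hs i; have h2 := hs j
        rw [hsplit] at h1 h2
        simp only [hA', hb', Sum.elim_inr, if_pos h]
        have hsum : ∑ l, (a i * A j (Fin.castSucc l) - a j * A i (Fin.castSucc l)) * y l
            = a i * g j - a j * g i := by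
          simp [hg, sub_mul, Finset.sum_sub_distrib, Finset.mul_sum, mul_assoc]
        rw [hsum]
        nlinarith [h.1, h.2, mul_le_mul_of_nonneg_left h2 (le_of_lt h.1),
          mul_le_mul_of_nonpos_left h1 (le_of_lt h.2)]
      · simp [hA', hb', h]

/-- Iterated Fourier–Motzkin: the projection of a polyhedron onto coordinate 0
is the solution set of a one-variable system. -/
lemma projLemma : ∀ (n : ℕ) (ι : Type) [Fintype ι] (A : ι → Fin (n+1) → ℝ) (b : ι → ℝ),
    ∃ (κ : Type) (_ : Fintype κ) (α : κ → ℝ) (β : κ → ℝ),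
      ∀ t : ℝ, (∀ k, β k ≤ α k * t) ↔
        ∃ x : Fin (n+1) → ℝ, x 0 = t ∧ ∀ i, b i ≤ ∑ j, A i j * x j := by
  intro n
  induction n with
  | zero =>
    intro ι _ A b
    refine ⟨ι, inferInstance, fun i => A i 0, b, fun t => ?_⟩
    constructor
    · intro h
      exact ⟨fun _ => t, rfl, fun i => by simpa [Fin.sum_univ_one] using h i⟩
    · rintro ⟨x, hx0, hx⟩ i
      have := hx i
      rw [Fin.sum_univ_one] at this
      rwa [hx0] at this
  | succ n ih =>
    intro ι _ A b
    obtain ⟨κ', _, A', b', hA'⟩ := elimStep A b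
    obtain ⟨κ, fκ, α, β, hκ⟩ := ih κ' A' b'
    refine ⟨κ, fκ, α, β, fun t => ?_⟩
    rw [hκ]
    constructor
    · rintro ⟨y, hy0, hy⟩
      obtain ⟨s, hs⟩ := (hA' y).mp hy
      refine ⟨Fin.snoc y s, ?_, hs⟩
      rw [← Fin.castSucc_zero, Fin.snoc_castSucc]
      exact hy0
    · rintro ⟨x, hx0, hx⟩
      refine ⟨Fin.init x, ?_, (hA' (Fin.init x)).mpr ⟨x (Fin.last _), ?_⟩⟩
      · rw [Fin.init]
        simpa [Fin.castSucc_zero] using hx0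
      · simpa [Fin.snoc_init_self] using hx

/-- A linear functional bounded below on a nonempty polyhedron attains its minimum. -/
lemma lp_attain {m n : ℕ} (B : Fin m → Fin n → ℝ) (b : Fin m → ℝ) (c : Fin n → ℝ)
    (x₀ : Fin n → ℝ) (h₀ : ∀ i, b i ≤ ∑ j, B i j * x₀ j)
    (d : ℝ) (hd : ∀ x : Fin n → ℝ, (∀ i, b i ≤ ∑ j, B i j * x j) → d ≤ ∑ j, c j * x j) :
    ∃ v, IsLeast {w : ℝ | ∃ x : Fin n → ℝ,
        (∀ i, b i ≤ ∑ j, B i j * x j) ∧ w = ∑ j, c j * x j} v := by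
  classical
  set S : Set ℝ := {w : ℝ | ∃ x : Fin n → ℝ,
      (∀ i, b i ≤ ∑ j, B i j * x j) ∧ w = ∑ j, c j * x j} with hS
  -- extended system on Fin (n+1): variable 0 is the objective value t
  set ι : Type := Fin m ⊕ Bool with hι
  set AH : ι → Fin (n+1) → ℝ := Sum.elim
      (fun i => Fin.cons 0 (fun j => B i j))
      (fun u => if u then Fin.cons (-1) c else Fin.cons 1 (fun j => - c j)) with hAH
  set bH : ι → ℝ := Sum.elim b (fun _ => 0) with hbH
  obtain ⟨κ, fκ, α, β, hκ⟩ := projLemma n ι AH bH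
  have hsum : ∀ (r : ℝ) (w : Fin n → ℝ) (z : Fin (n+1) → ℝ),
      ∑ j, (Fin.cons r w : Fin (n+1) → ℝ) j * z j
        = r * z 0 + ∑ j : Fin n, w j * z j.succ := by
    intro r w z
    rw [Fin.sum_univ_succ]
    simp
  -- identify S with the 1-variable solution set
  have hiff : ∀ t : ℝ, t ∈ S ↔ (∀ k, β k ≤ α k * t) := by
    intro t
    rw [hκ]
    constructor
    · rintro ⟨x, hx, rfl⟩
      refine ⟨Fin.cons (∑ j, c j * x j) x, rfl, ?_⟩
      rintro (i | u)
      · simp only [hAH, hbH, Sum.elim_inl]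
        rw [hsum]
        simpa using hx i
      · rcases u with _ | _ <;>
        · simp only [hAH, hbH, Sum.elim_inr, Bool.false_eq_true, if_true, if_false]
          rw [hsum]
          simp
    · rintro ⟨z, hz0, hz⟩
      refine ⟨Fin.tail z, fun i => ?_, ?_⟩
      · have := hz (Sum.inl i)
        simp only [hAH, hbH, Sum.elim_inl] at this
        rw [hsum] at this
        simpa [Fin.tail] using this
      · have h1 := hz (Sum.inr true)
        have h2 := hz (Sum.inr false)
        simp only [hAH, hbH, Sum.elim_inr, Bool.false_eq_true, if_true, if_false] at h1 h2
        rw [hsum] at h1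
        rw [hsum] at h2
        simp only [Fin.tail]
        rw [← hz0]
        simp only [neg_mul, one_mul, neg_mul] at h1 h2
        rw [Finset.sum_neg_distrib] at h2
        linarith
  have hSset : S = {t : ℝ | ∀ k, β k ≤ α k * t} := by
    ext t; exact hiff t
  have hclosed : IsClosed S := by
    rw [hSset]
    have : {t : ℝ | ∀ k, β k ≤ α k * t} = ⋂ k, {t : ℝ | β k ≤ α k * t} := by
      ext t; simp [Set.mem_iInter]
    rw [this]
    exact isClosed_iInter fun k =>
      isClosed_le continuous_const (continuous_const.mul continuous_id)
  have hSne : S.Nonempty := ⟨∑ j, c j * x₀ j, x₀, h₀, rfl⟩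
  have hbdd : BddBelow S := ⟨d, by rintro w ⟨x, hx, rfl⟩; exact hd x hx⟩
  exact ⟨sInf S, hclosed.csInf_mem hSne hbdd, fun w hw => csInf_le hbdd hw⟩

/-- if A is integral, Ax ≥ b is TDI and P = {x : Ax ≥ b} is nonempty,
then the Chvátal closure of P is {x : Ax ≥ ⌈b⌉}. -/
theorem stmt5 {m n : ℕ} (A : Matrix (Fin m) (Fin n) ℤ) (b : Fin m → ℝ)
    (P : Set (Fin n → ℝ))
    (hP : P = {x | ∀ i, b i ≤ ∑ j, (A i j : ℝ) * x j})
    (hne : P.Nonempty) (htdi : TDIInt A b) :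
    chvatalClosure P = {x | ∀ i, (⌈b i⌉ : ℝ) ≤ ∑ j, (A i j : ℝ) * x j} := by
  ext x
  constructor
  · intro hx i
    exact hx (fun j => A i j) (b i) (fun y hy => by rw [hP] at hy; exact hy i)
  · intro hx c d hval
    obtain ⟨x₀, hx₀⟩ := hne
    rw [hP] at hx₀
    have hd : ∀ z : Fin n → ℝ, (∀ i, b i ≤ ∑ j, (A i j : ℝ) * z j) →
        d ≤ ∑ j, (c j : ℝ) * z j := by
      intro z hz
      exact hval z (by rw [hP]; exact hz)
    obtain ⟨v, hv⟩ := lp_attain (fun i j => (A i j : ℝ)) b (fun j => (c j : ℝ)) x₀ hx₀ d hd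
    obtain ⟨y, hy0, hyA, hyb⟩ := htdi c v hv
    -- d ≤ v
    have hdv : d ≤ v := by
      obtain ⟨x', hx', rfl⟩ := hv.1
      exact hd x' hx'
    -- the integer N = ∑ y i * ⌈b i⌉ satisfies d ≤ N
    set N : ℤ := ∑ i, y i * ⌈b i⌉ with hN
    have hNreal : (N : ℝ) = ∑ i, (y i : ℝ) * (⌈b i⌉ : ℝ) := by
      push_cast [hN]; rfl
    have hvN : v ≤ (N : ℝ) := by
      rw [← hyb, hNreal]
      refine Finset.sum_le_sum fun i _ => ?_
      have : (0:ℝ) ≤ (y i : ℝ) := by exact_mod_cast hy0 i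
      exact mul_le_mul_of_nonneg_left (Int.le_ceil (b i)) this
    have hceil : (⌈d⌉ : ℝ) ≤ (N : ℝ) := by
      exact_mod_cast Int.ceil_le.mpr (by linarith : d ≤ (N : ℝ))
    -- N ≤ cᵀx
    have hNx : (N : ℝ) ≤ ∑ j, (c j : ℝ) * x j := by
      have hrow : ∀ j, ((c j : ℝ)) = ∑ i, (y i : ℝ) * (A i j : ℝ) := by
        intro j
        have := hyA j
        exact_mod_cast (congrArg (fun z : ℤ => (z : ℝ)) this).symm
      calc (N : ℝ) = ∑ i, (y i : ℝ) * (⌈b i⌉ : ℝ) := hNreal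
        _ ≤ ∑ i, (y i : ℝ) * ∑ j, (A i j : ℝ) * x j := by
            refine Finset.sum_le_sum fun i _ => ?_
            have h0 : (0:ℝ) ≤ (y i : ℝ) := by exact_mod_cast hy0 i
            exact mul_le_mul_of_nonneg_left (hx i) h0
        _ = ∑ j, (c j : ℝ) * x j := by
            simp only [Finset.mul_sum]
            rw [Finset.sum_comm]
            refine Finset.sum_congr rfl fun j _ => ?_
            rw [hrow j, Finset.sum_mul]
            refine Finset.sum_congr rfl fun i _ => ?_
            ring
    linarith
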